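/- In the universal enveloping algebra H = U(gl_2 ⋉ (k^2 ⊕ (k^2)*)), the element b = y_1 x - x_1 y is central. -/

import Mathlib

set_option maxHeartbeats 1000000

private lemma lieMul {A : Type} [Ring A] (a b c : A) :
    ⁅a, b * c⁆ = ⁅a, b⁆ * c + b * ⁅a, c⁆ := by
  simp only [Ring.lie_def]; noncomm_ring

private lemma lieSkewZero {A : Type} [Ring A] {a b : A} (h : ⁅a, b⁆ = 0) :
    ⁅b, a⁆ = 0 := by
  rw [Ring.lie_def, sub_eq_zero] at h ⊢; exact h.symm

private lemma lieSubR {A : Type} [Ring A] (a b c : A) :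
    ⁅a, b - c⁆ = ⁅a, b⁆ - ⁅a, c⁆ := by
  simp only [Ring.lie_def]; noncomm_ring

private lemma lieSelfR {A : Type} [Ring A] (a : A) :
    ⁅a, a⁆ = 0 := by
  simp only [Ring.lie_def]; noncomm_ring

theorem stmt4 {k : Type} [Field k] [CharZero k] {A : Type} [Ring A] [Algebra k A]
    (ee ff hh tt xx yy x1 y1 : A)
    (hHE : ⁅hh, ee⁆ = 2*ee) (hHF : ⁅hh, ff⁆ = -(2*ff)) (hEF : ⁅ee, ff⁆ = hh)
    (hTE : ⁅tt, ee⁆ = 0) (hTF : ⁅tt, ff⁆ = 0) (hTH : ⁅tt, hh⁆ = 0)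
    (hEX : ⁅ee, xx⁆ = 0) (hEY : ⁅ee, yy⁆ = xx)
    (hFX : ⁅ff, xx⁆ = yy) (hFY : ⁅ff, yy⁆ = 0)
    (hHX : ⁅hh, xx⁆ = xx) (hHY : ⁅hh, yy⁆ = -yy)
    (hTX : ⁅tt, xx⁆ = xx) (hTY : ⁅tt, yy⁆ = yy)
    (hEX1 : ⁅ee, x1⁆ = 0) (hEY1 : ⁅ee, y1⁆ = x1)
    (hFX1 : ⁅ff, x1⁆ = y1) (hFY1 : ⁅ff, y1⁆ = 0)
    (hHX1 : ⁅hh, x1⁆ = x1) (hHY1 : ⁅hh, y1⁆ = -y1)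
    (hTX1 : ⁅tt, x1⁆ = -x1) (hTY1 : ⁅tt, y1⁆ = -y1)
    (hXY : ⁅xx, yy⁆ = 0) (hXX1 : ⁅xx, x1⁆ = 0) (hXY1 : ⁅xx, y1⁆ = 0)
    (hYX1 : ⁅yy, x1⁆ = 0) (hYY1 : ⁅yy, y1⁆ = 0) (hX1Y1 : ⁅x1, y1⁆ = 0)
    (hgen : Algebra.adjoin k ({ee, ff, hh, tt, xx, yy, x1, y1} : Set A) = ⊤)
    (hPBW : LinearIndependent k (fun m : Fin 8 → ℕ =>
      ee ^ m 0 * ff ^ m 1 * hh ^ m 2 * tt ^ m 3 * xx ^ m 4 * yy ^ m 5 * x1 ^ m 6 * y1 ^ m 7))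
    :
    (y1*xx - x1*yy) ∈ Subalgebra.center k A := by
  have hYX : ⁅yy, xx⁆ = 0 := lieSkewZero hXY
  have hX1X : ⁅x1, xx⁆ = 0 := lieSkewZero hXX1
  have hY1X : ⁅y1, xx⁆ = 0 := lieSkewZero hXY1
  have hX1Y : ⁅x1, yy⁆ = 0 := lieSkewZero hYX1
  have hY1Y : ⁅y1, yy⁆ = 0 := lieSkewZero hYY1
  have hY1X1 : ⁅y1, x1⁆ = 0 := lieSkewZero hX1Y1
  set b : A := y1*xx - x1*yy with hb
  have comm : ∀ g ∈ ({ee, ff, hh, tt, xx, yy, x1, y1} : Set A), ⁅g, b⁆ = 0 := by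
    intro g hg
    simp only [Set.mem_insert_iff, Set.mem_singleton_iff] at hg
    rcases hg with rfl|rfl|rfl|rfl|rfl|rfl|rfl|rfl <;>
      · simp only [hb, lieSubR, lieMul, hEX, hEY, hFX, hFY, hHX, hHY, hTX, hTY,
          hEX1, hEY1, hFX1, hFY1, hHX1, hHY1, hTX1, hTY1, hXY, hXX1, hXY1, hYX1, hYY1,
          hX1Y1, hYX, hX1X, hY1X, hX1Y, hY1Y, hY1X1, lieSelfR,
          mul_zero, zero_mul, add_zero, zero_add, mul_neg, neg_mul]
        abel
  have hle : Algebra.adjoin k ({ee, ff, hh, tt, xx, yy, x1, y1} : Set A) ≤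
      Subalgebra.centralizer k {b} := by
    apply Algebra.adjoin_le
    intro g hg
    have hgb := comm g hg
    rw [Ring.lie_def, sub_eq_zero] at hgb
    show g ∈ Subalgebra.centralizer k {b}
    rw [Subalgebra.mem_centralizer_iff]
    rintro z rfl
    exact hgb.symm
  rw [Subalgebra.mem_center_iff]
  intro a
  have ha : a ∈ Subalgebra.centralizer k {b} := hle (hgen ▸ Algebra.mem_top)
  exact ((Subalgebra.mem_centralizer_iff k).mp ha b rfl).symm
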